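/- If the product subshift Y × Z is half-synchronized, then both Y and Z are half-synchronized. -/

import Mathlib

namespace Paper

variable {A B C : Type*}

def shiftMap (x : ℤ → A) : ℤ → A := fun i => x (i + 1)

def shiftInvMap (x : ℤ → A) : ℤ → A := fun i => x (i - 1)

/-- A subshift: nonempty, shift-invariant (both directions), and closed
(expressed combinatorially: any configuration all of whose central patterns
are approximated by members is a member). -/
def IsSubshift (X : Set (ℤ → A)) : Prop :=
  X.Nonempty ∧ (∀ x ∈ X, shiftMap x ∈ X) ∧ (∀ x ∈ X, shiftInvMap x ∈ X) ∧
  ∀ x : ℤ → A, (∀ n : ℕ, ∃ y ∈ X, ∀ i : ℤ, |i| ≤ (n : ℤ) → y i = x i) → x ∈ X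

/-- The word `x[i, i+k-1]`. -/
def cfgWord (x : ℤ → A) (i : ℤ) (k : ℕ) : List A :=
  List.ofFn (fun t : Fin k => x (i + ((t : ℕ) : ℤ)))

/-- The language of a set of configurations. -/
def lang (X : Set (ℤ → A)) : Set (List A) := {w | ∃ x ∈ X, ∃ i : ℤ, cfgWord x i w.length = w}

def TransitiveShift (X : Set (ℤ → A)) : Prop :=
  ∀ u ∈ lang X, ∀ v ∈ lang X, ∃ w : List A, u ++ w ++ v ∈ lang X

/-- Left ray of a configuration: `leftRay x n = x (-1-n)`. -/
def leftRay (x : ℤ → A) : ℕ → A := fun n => x (-1 - (n : ℤ))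

def rightRay (x : ℤ → A) : ℕ → A := fun n => x (n : ℤ)

def LeftRays (X : Set (ℤ → A)) : Set (ℕ → A) := leftRay '' X

def RightRays (X : Set (ℤ → A)) : Set (ℕ → A) := rightRay '' X

/-- Glue a left ray and a right ray into a configuration. -/
def glue (l r : ℕ → A) : ℤ → A := fun i => if 0 ≤ i then r i.toNat else l (-1 - i).toNat

/-- Follower set of a left-infinite sequence. -/
def foll (X : Set (ℤ → A)) (l : ℕ → A) : Set (ℕ → A) := {r | glue l r ∈ X}

def wordThen (w : List A) (r : ℕ → A) : ℕ → A :=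
  fun n => if h : n < w.length then w.get ⟨n, h⟩ else r (n - w.length)

/-- Follower set of a word. -/
def follW (X : Set (ℤ → A)) (w : List A) : Set (ℕ → A) := {r | wordThen w r ∈ RightRays X}

def occursInLeft (l : ℕ → A) (w : List A) : Prop :=
  ∃ j : ℕ, ∀ k : Fin w.length, l (j + (w.length - 1 - (k : ℕ))) = w.get k

/-- The language of a left-infinite sequence. -/
def langL (l : ℕ → A) : Set (List A) := {w | occursInLeft l w}

/-- The left ray `l` ends with the word `w`. -/
def raySuffix (l : ℕ → A) (w : List A) : Prop :=
  ∀ k : Fin w.length, l (w.length - 1 - (k : ℕ)) = w.get k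

def HalfSyncWord (X : Set (ℤ → A)) (w : List A) : Prop :=
  w ∈ lang X ∧ ∃ l ∈ LeftRays X, raySuffix l w ∧ langL l = lang X ∧ foll X l = follW X w

def HalfSynchronized (X : Set (ℤ → A)) : Prop := TransitiveShift X ∧ ∃ w, HalfSyncWord X w

def SyncWord (X : Set (ℤ → A)) (w : List A) : Prop :=
  w ∈ lang X ∧ ∀ l ∈ LeftRays X, raySuffix l w → foll X l = follW X w

def Synchronized (X : Set (ℤ → A)) : Prop := TransitiveShift X ∧ ∃ w, SyncWord X w

/-- Product of two subshifts, over the product alphabet. -/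
def prodShift (Y : Set (ℤ → B)) (Z : Set (ℤ → C)) : Set (ℤ → B × C) :=
  {x | (fun i => (x i).1) ∈ Y ∧ (fun i => (x i).2) ∈ Z}

/-- Identification of a pair of sets of right rays with a set of right rays
over the product alphabet. -/
def prodRaySet (S : Set (ℕ → B)) (T : Set (ℕ → C)) : Set (ℕ → B × C) :=
  {r | (fun n => (r n).1) ∈ S ∧ (fun n => (r n).2) ∈ T}

/-- Extend a left ray by one more symbol on the right. -/
def extendRay (l : ℕ → A) (a : A) : ℕ → A := fun n => if n = 0 then a else l (n - 1)

/-- Edge of the Krieger graph from `u` to `v` labeled `a`. -/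
def KEdge (X : Set (ℤ → A)) (u : Set (ℕ → A)) (a : A) (v : Set (ℕ → A)) : Prop :=
  ∃ l ∈ LeftRays X, extendRay l a ∈ LeftRays X ∧ u = foll X l ∧ v = foll X (extendRay l a)

def KStep (X : Set (ℤ → A)) (u v : Set (ℕ → A)) : Prop := ∃ a, KEdge X u a v

/-- Existence of a finite path in the Krieger graph. -/
def KReach (X : Set (ℤ → A)) : Set (ℕ → A) → Set (ℕ → A) → Prop :=
  Relation.ReflTransGen (KStep X)

def KVertex (X : Set (ℤ → A)) (v : Set (ℕ → A)) : Prop := ∃ l ∈ LeftRays X, v = foll X l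

/-- A subshift is sofic iff it has finitely many follower sets. -/
def Sofic (X : Set (ℤ → A)) : Prop := {v : Set (ℕ → A) | KVertex X v}.Finite

/-- Vertex of the Fischer graph (w.r.t. half-synchronizing word `w`): a vertex of the
Krieger graph in the maximal strongly connected subgraph containing `foll w`. -/
def FVertex (X : Set (ℤ → A)) (w : List A) (v : Set (ℕ → A)) : Prop :=
  KVertex X v ∧ KReach X (follW X w) v ∧ KReach X v (follW X w)

/-- Directed (multi)graph with vertex type `V` and edge type `E`. -/
structure DiGraph (V : Type*) (E : Type*) where
  ini : E → V
  ter : E → V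

variable {V E V' E' : Type*}

/-- Bi-infinite path on a graph. -/
def BiPath (G : DiGraph V E) (x : ℤ → E) : Prop := ∀ i : ℤ, G.ter (x i) = G.ini (x (i + 1))

/-- `p` is a finite path of `m+1` edges. -/
def FinPath (G : DiGraph V E) (m : ℕ) (p : Fin (m + 1) → E) : Prop :=
  ∀ k : Fin m, G.ter (p k.castSucc) = G.ini (p k.succ)

/-- The subpath `x[i, i+n]` of a bi-infinite path is a shortest path between its endpoints. -/
def GeodesicSeg (G : DiGraph V E) (x : ℤ → E) (i : ℤ) (n : ℕ) : Prop :=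
  ∀ (m : ℕ) (p : Fin (m + 1) → E), FinPath G m p →
    G.ini (p 0) = G.ini (x i) → G.ter (p (Fin.last m)) = G.ter (x (i + (n : ℤ))) → n ≤ m

def EvGeodesic (G : DiGraph V E) (x : ℤ → E) : Prop :=
  ∃ i₀ : ℤ, ∀ i : ℤ, i₀ ≤ i → ∀ n : ℕ, GeodesicSeg G x i n

/-- Strictly proximal pair of bi-infinite paths. -/
def StrictProxPair (x y : ℤ → E) : Prop :=
  (∀ n : ℕ, ∃ i : ℕ, ∀ k : ℕ, k ≤ n → x ((i : ℤ) + (k : ℤ)) = y ((i : ℤ) + (k : ℤ))) ∧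
  ∀ N : ℕ, ∃ i : ℕ, N ≤ i ∧ x ((i : ℕ) : ℤ) ≠ y ((i : ℕ) : ℤ)

def HasEvGeoProxPair (G : DiGraph V E) : Prop :=
  ∃ x y : ℤ → E, BiPath G x ∧ BiPath G y ∧ EvGeodesic G x ∧ EvGeodesic G y ∧ StrictProxPair x y

/-- Edges of the Fischer graph: Krieger edges between Fischer vertices. -/
def FischerE (X : Set (ℤ → A)) (w : List A) : Type _ :=
  {t : Set (ℕ → A) × A × Set (ℕ → A) //
    FVertex X w t.1 ∧ FVertex X w t.2.2 ∧ KEdge X t.1 t.2.1 t.2.2}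

def FischerGraph (X : Set (ℤ → A)) (w : List A) : DiGraph (Set (ℕ → A)) (FischerE X w) :=
  ⟨fun e => e.1.1, fun e => e.1.2.2⟩

def SlidingBlockCode (X : Set (ℤ → A)) (F : (ℤ → A) → (ℤ → B)) : Prop :=
  ∃ (r : ℕ) (f : (Fin (2 * r + 1) → A) → B),
    ∀ x ∈ X, ∀ i : ℤ, F x i = f (fun k => x (i + ((k : ℕ) : ℤ) - (r : ℤ)))

def ShiftConjugate (X : Set (ℤ → A)) (Y : Set (ℤ → B)) : Prop :=
  ∃ F : (ℤ → A) → (ℤ → B), SlidingBlockCode X F ∧ Set.InjOn F X ∧ F '' X = Y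

def DirectPrime (X : Set (ℤ → A)) : Prop :=
  ∀ (B C : Type) (_ : Finite B) (_ : Finite C) (Y : Set (ℤ → B)) (Z : Set (ℤ → C)),
    IsSubshift Y → IsSubshift Z → ShiftConjugate X (prodShift Y Z) →
    (∃ y, Y = {y}) ∨ (∃ z, Z = {z})

lemma cfgWord_map (f : A → B) (x : ℤ → A) (i : ℤ) (k : ℕ) :
    cfgWord (fun n => f (x n)) i k = (cfgWord x i k).map f := by
  simp [cfgWord, List.map_ofFn]; rfl

lemma glue_self (x : ℤ → A) : glue (leftRay x) (rightRay x) = x := by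
  funext i
  simp only [glue, leftRay, rightRay]
  split
  · congr 1; omega
  · congr 1; omega

lemma glue_comp (f : A → B) (l r : ℕ → A) :
    (fun i => f (glue l r i)) = glue (fun n => f (l n)) (fun n => f (r n)) := by
  funext i
  simp only [glue]
  split <;> rfl

lemma wordThen_map (f : A → B) (w : List A) (r : ℕ → A) :
    (fun n => f (wordThen w r n)) = wordThen (w.map f) (fun n => f (r n)) := by
  funext n
  by_cases h : n < w.length <;>
    simp [wordThen, h, List.getElem_map]

lemma factor_half_sync (X : Set (ℤ → A)) (Y : Set (ℤ → B)) (Z : Set (ℤ → C))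
    (π : A → B) (ρ : A → C) (j : B → C → A)
    (hπ : ∀ b c, π (j b c) = b) (hρ : ∀ b c, ρ (j b c) = c)
    (hj : ∀ a, j (π a) (ρ a) = a)
    (hmem : ∀ x : ℤ → A, x ∈ X ↔ (fun i => π (x i)) ∈ Y ∧ (fun i => ρ (x i)) ∈ Z)
    (hZne : Z.Nonempty) (h : HalfSynchronized X) : HalfSynchronized Y := by
  obtain ⟨z₀, hz₀⟩ := hZne
  obtain ⟨htrans, w, hwlang, l, ⟨x₀, hx₀X, rfl⟩, hsuf, hlangL, hfoll⟩ := h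
  have proj : ∀ x ∈ X, (fun i => π (x i)) ∈ Y := fun x hx => ((hmem x).1 hx).1
  have projZ : ∀ x ∈ X, (fun i => ρ (x i)) ∈ Z := fun x hx => ((hmem x).1 hx).2
  have lift : ∀ y ∈ Y, (fun i => j (y i) (z₀ i)) ∈ X := by
    intro y hy
    rw [hmem]
    constructor
    · simpa [hπ] using hy
    · simpa [hρ] using hz₀
  have langproj : ∀ w' ∈ lang X, w'.map π ∈ lang Y := by
    rintro w' ⟨x, hx, i, hw'⟩
    exact ⟨_, proj x hx, i, by rw [List.length_map, cfgWord_map, hw']⟩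
  have langlift : ∀ u ∈ lang Y, ∃ w' ∈ lang X, w'.map π = u := by
    rintro u ⟨y, hy, i, hu⟩
    refine ⟨cfgWord (fun n => j (y n) (z₀ n)) i u.length,
      ⟨_, lift y hy, i, by simp [cfgWord]⟩, ?_⟩
    rw [← cfgWord_map]
    simp only [hπ]
    exact hu
  constructor
  · intro u hu v hv
    obtain ⟨u', hu', hu'e⟩ := langlift u hu
    obtain ⟨v', hv', hv'e⟩ := langlift v hv
    obtain ⟨m, hm⟩ := htrans u' hu' v' hv'
    exact ⟨m.map π, by simpa [hu'e, hv'e] using langproj _ hm⟩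
  -- the half-synchronizing word for Y
  refine ⟨w.map π, langproj w hwlang, fun n => π (leftRay x₀ n),
    ⟨fun i => π (x₀ i), proj x₀ hx₀X, rfl⟩, ?_, ?_, ?_⟩
  · -- raySuffix
    intro k
    have hk : (k : ℕ) < w.length := by simpa using k.2
    have := hsuf ⟨k, hk⟩
    simp only [List.length_map, List.get_eq_getElem, List.getElem_map]
    simp only [List.get_eq_getElem] at this
    rw [this]
  · -- langL = lang Y
    ext u
    constructor
    · rintro ⟨j₀, hj₀⟩
      set v := List.ofFn (fun k : Fin u.length => leftRay x₀ (j₀ + (u.length - 1 - (k : ℕ)))) with hv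
      have hvlen : v.length = u.length := List.length_ofFn
      have hvocc : v ∈ langL (leftRay x₀) := by
        refine ⟨j₀, fun k => ?_⟩
        simp [hv, List.get_ofFn, hvlen]
      have hvX : v ∈ lang X := by rw [← hlangL]; exact hvocc
      have hmap : v.map π = u := by
        rw [hv, List.map_ofFn]
        have : (π ∘ fun k : Fin u.length => leftRay x₀ (j₀ + (u.length - 1 - (k : ℕ))))
            = u.get := funext fun k => hj₀ k
        rw [this, List.ofFn_get]
      exact hmap ▸ langproj v hvX
    · intro hu
      obtain ⟨w', hw', rfl⟩ := langlift u hu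
      have hw'occ : w' ∈ langL (leftRay x₀) := by rw [hlangL]; exact hw'
      obtain ⟨j₀, hj₀⟩ := hw'occ
      refine ⟨j₀, fun k => ?_⟩
      have hk : (k : ℕ) < w'.length := by simpa using k.2
      have := hj₀ ⟨k, hk⟩
      simp only [List.get_eq_getElem] at this ⊢
      simp only [List.length_map, List.getElem_map]
      rw [← this]
  · -- follower sets
    have hrhat : glue (leftRay x₀) (rightRay x₀) ∈ X := by rw [glue_self]; exact hx₀X
    have hrhatW : rightRay x₀ ∈ follW X w := by rw [← hfoll]; exact hrhat
    obtain ⟨x₁, hx₁X, hx₁⟩ := hrhatW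
    -- for each r : ℕ → B, the companion ray over A
    set R : (ℕ → B) → (ℕ → A) := fun r n => j (r n) (ρ (rightRay x₀ n)) with hR
    have πglue : ∀ r : ℕ → B, (fun i => π (glue (leftRay x₀) (R r) i))
        = glue (fun n => π (leftRay x₀ n)) r := by
      intro r
      rw [glue_comp]
      simp [hR, hπ]
    have ρglue : ∀ r : ℕ → B, (fun i => ρ (glue (leftRay x₀) (R r) i))
        = (fun i => ρ (x₀ i)) := by
      intro r
      rw [glue_comp]
      have : (fun n => ρ (R r n)) = fun n => ρ (rightRay x₀ n) := by
        funext n; simp [hR, hρ]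
      rw [this, ← glue_comp, glue_self]
    ext r
    constructor
    · -- foll ⊆ follW
      intro hr
      have hX : glue (leftRay x₀) (R r) ∈ X := by
        rw [hmem]
        exact ⟨by rw [πglue]; exact hr, by rw [ρglue]; exact projZ x₀ hx₀X⟩
      have : R r ∈ follW X w := by rw [← hfoll]; exact hX
      obtain ⟨x₂, hx₂X, hx₂⟩ := this
      refine ⟨fun i => π (x₂ i), proj x₂ hx₂X, ?_⟩
      have : (fun n => π (rightRay x₂ n)) = fun n => π (wordThen w (R r) n) := by
        rw [hx₂]
      calc rightRay (fun i => π (x₂ i)) = fun n => π (wordThen w (R r) n) := this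
        _ = wordThen (w.map π) (fun n => π (R r n)) := wordThen_map π w (R r)
        _ = wordThen (w.map π) r := by simp [hR, hπ]
    · -- follW ⊆ foll
      rintro ⟨y₁, hy₁Y, hy₁⟩
      have hx₂X : (fun i => j (y₁ i) (ρ (x₁ i))) ∈ X := by
        rw [hmem]
        constructor
        · simpa [hπ] using hy₁Y
        · simpa [hρ] using projZ x₁ hx₁X
      have hrr : rightRay (fun i => j (y₁ i) (ρ (x₁ i))) = wordThen w (R r) := by
        funext n
        have h1 : y₁ (n : ℤ) = wordThen (w.map π) r n := congrFun hy₁ n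
        have h2 : ρ (x₁ (n : ℤ)) = ρ (wordThen w (rightRay x₀) n) := by
          rw [← hx₁]; rfl
        show j (y₁ (n : ℤ)) (ρ (x₁ (n : ℤ))) = wordThen w (R r) n
        rw [h1, h2]
        by_cases h : n < w.length
        · simp only [wordThen, List.length_map, h, dif_pos, List.get_eq_getElem,
            List.getElem_map]
          exact hj _
        · simp only [wordThen, List.length_map, h, dif_neg, not_false_iff]; rfl
      have : R r ∈ follW X w := ⟨_, hx₂X, hrr⟩
      rw [← hfoll] at this
      have : (fun i => π (glue (leftRay x₀) (R r) i)) ∈ Y := proj _ this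
      rwa [πglue] at this


theorem stmt0 [Finite B] [Finite C]
    (Y : Set (ℤ → B)) (Z : Set (ℤ → C)) (hY : IsSubshift Y) (hZ : IsSubshift Z)
    (h : HalfSynchronized (prodShift Y Z)) :
    HalfSynchronized Y ∧ HalfSynchronized Z := by
  constructor
  · exact factor_half_sync (prodShift Y Z) Y Z Prod.fst Prod.snd Prod.mk
      (fun _ _ => rfl) (fun _ _ => rfl) (fun _ => rfl) (fun _ => Iff.rfl) hZ.1 h
  · exact factor_half_sync (prodShift Y Z) Z Y Prod.snd Prod.fst (fun c b => (b, c))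
      (fun _ _ => rfl) (fun _ _ => rfl) (fun _ => rfl)
      (fun x => ⟨fun hx => ⟨hx.2, hx.1⟩, fun hx => ⟨hx.2, hx.1⟩⟩) hY.1 h

end Paper
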